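/- In a fuzzy star FS_n with center c (the vertex of the unique maximum spanning star adjacent to all other n vertices), the strong domination index is SDI(FS_n) = min{υ(uv) : uv an edge} + n·q, where q is the size (sum of all edge weights) of FS_n. -/

import Mathlib

open Finset

/-- A fuzzy graph on vertex type `V`. -/
structure FuzzyGraph (V : Type*) where
  ρ : V → ℝ
  υ : V → V → ℝ
  ρ_nonneg : ∀ a, 0 ≤ ρ a
  ρ_le_one : ∀ a, ρ a ≤ 1
  υ_nonneg : ∀ a b, 0 ≤ υ a b
  symm : ∀ a b, υ a b = υ b a
  υ_le : ∀ a b, υ a b ≤ min (ρ a) (ρ b)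
  loopless : ∀ a, υ a a = 0

namespace FuzzyGraph

variable {V : Type*} [Fintype V] [DecidableEq V]

/-- Strength of a path given by its list of successive vertices:
the minimum of the weights of its edges. -/
def pathStrength (X : FuzzyGraph V) : List V → ℝ
  | [] => 0
  | [_] => 0
  | [a, b] => X.υ a b
  | a :: b :: c :: l => min (X.υ a b) (X.pathStrength (b :: c :: l))

/-- `l` is a path from `a` to `b` : distinct vertices joined by positive-weight edges. -/
def IsPath (X : FuzzyGraph V) (a b : V) (l : List V) : Prop :=
  l.Nodup ∧ l.head? = some a ∧ l.getLast? = some b ∧ 2 ≤ l.length ∧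
    l.Chain' (fun x y => 0 < X.υ x y)

/-- Strength of connectedness between two vertices: maximum strength of a path. -/
noncomputable def conn (X : FuzzyGraph V) (a b : V) : ℝ :=
  sSup {s | ∃ l : List V, X.IsPath a b l ∧ s = X.pathStrength l}

/-- Delete the edge `ab` (set its weight to `0`). -/
def deleteEdge (X : FuzzyGraph V) (a b : V) : FuzzyGraph V where
  ρ := X.ρ
  υ x y := if (x = a ∧ y = b) ∨ (x = b ∧ y = a) then 0 else X.υ x y
  ρ_nonneg := X.ρ_nonneg
  ρ_le_one := X.ρ_le_one
  υ_nonneg := by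
    intro x y; try dsimp only
    split_ifs
    · exact le_rfl
    · exact X.υ_nonneg x y
  symm := by
    intro x y; try dsimp only
    by_cases h : (x = a ∧ y = b) ∨ (x = b ∧ y = a)
    · rw [if_pos h, if_pos (by tauto)]
    · rw [if_neg h, if_neg (by tauto), X.symm]
  υ_le := by
    intro x y; try dsimp only
    split_ifs
    · exact le_min (X.ρ_nonneg x) (X.ρ_nonneg y)
    · exact X.υ_le x y
  loopless := by
    intro x; try dsimp only
    split_ifs
    · rfl
    · exact X.loopless x

/-- `ab` is a strong edge (α- or β-strong). -/
def StrongEdge (X : FuzzyGraph V) (a b : V) : Prop :=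
  0 < X.υ a b ∧ (X.deleteEdge a b).conn a b ≤ X.υ a b

/-- `ab` is an α-strong edge. -/
def AlphaStrong (X : FuzzyGraph V) (a b : V) : Prop :=
  0 < X.υ a b ∧ (X.deleteEdge a b).conn a b < X.υ a b

/-- `ab` is a β-strong edge. -/
def BetaStrong (X : FuzzyGraph V) (a b : V) : Prop :=
  0 < X.υ a b ∧ X.υ a b = (X.deleteEdge a b).conn a b

/-- `ab` is a δ-edge. -/
def DeltaEdge (X : FuzzyGraph V) (a b : V) : Prop :=
  0 < X.υ a b ∧ X.υ a b < (X.deleteEdge a b).conn a b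

/-- The minimum weight of a strong edge incident at `a`. -/
noncomputable def minInc (X : FuzzyGraph V) (a : V) : ℝ :=
  sInf {w | ∃ b, X.StrongEdge a b ∧ w = X.υ a b}

/-- The weight of a set of vertices. -/
noncomputable def weight (X : FuzzyGraph V) (S : Finset V) : ℝ :=
  ∑ a ∈ S, X.minInc a

/-- `D` is a strong dominating set. -/
def IsSDS (X : FuzzyGraph V) (D : Finset V) : Prop :=
  ∀ v, v ∉ D → ∃ a ∈ D, X.StrongEdge a v

/-- `D` is a minimal strong dominating set. -/
def IsMinimalSDS (X : FuzzyGraph V) (D : Finset V) : Prop :=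
  X.IsSDS D ∧ ∀ a ∈ D, ¬ X.IsSDS (D.erase a)

/-- `D` is a minimum (least weight) strong dominating set. -/
def IsMinimumSDS (X : FuzzyGraph V) (D : Finset V) : Prop :=
  X.IsSDS D ∧ ∀ D' : Finset V, X.IsSDS D' → X.weight D ≤ X.weight D'

/-- The strong domination degree of a vertex. -/
noncomputable def sd (X : FuzzyGraph V) (u : V) : ℝ :=
  sInf {w | ∃ D : Finset V, X.IsMinimalSDS D ∧ u ∈ D ∧ w = X.weight D}

/-- The strong domination number. -/
noncomputable def gammaS (X : FuzzyGraph V) : ℝ :=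
  sInf {w | ∃ D : Finset V, X.IsSDS D ∧ w = X.weight D}

/-- The upper strong domination number. -/
noncomputable def GammaS (X : FuzzyGraph V) : ℝ :=
  sSup {w | ∃ D : Finset V, X.IsMinimalSDS D ∧ w = X.weight D}

/-- The strong domination index. -/
noncomputable def SDI (X : FuzzyGraph V) : ℝ := ∑ u : V, X.sd u

/-- `X` is connected. -/
def Connected (X : FuzzyGraph V) : Prop := ∀ a b : V, a ≠ b → ∃ l, X.IsPath a b l

/-- `X` is a strong fuzzy graph: every edge is strong. -/
def IsStrongFG (X : FuzzyGraph V) : Prop := ∀ a b, 0 < X.υ a b → X.StrongEdge a b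

/-- Underlying (support) simple graph. -/
def support (X : FuzzyGraph V) : SimpleGraph V where
  Adj a b := 0 < X.υ a b
  symm := ⟨by intro a b h; (try dsimp only at h ⊢); rw [X.symm]; exact h⟩
  loopless := ⟨by intro a h; (try dsimp only at h); rw [X.loopless] at h; exact lt_irrefl 0 h⟩

/-- `X` is a fuzzy tree. -/
def IsFuzzyTree (X : FuzzyGraph V) : Prop :=
  ∃ F : FuzzyGraph V, F.ρ = X.ρ ∧ (∀ a b, F.υ a b = X.υ a b ∨ F.υ a b = 0) ∧
    F.support.IsTree ∧ ∀ a b, 0 < X.υ a b → F.υ a b = 0 → X.υ a b < F.conn a b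

/-- The size of a fuzzy graph: the sum of all edge weights. -/
noncomputable def size (X : FuzzyGraph V) : ℝ := (∑ a : V, ∑ b : V, X.υ a b) / 2

/-- The underlying graph of `X` is a cycle. -/
def IsCycleGraph (X : FuzzyGraph V) : Prop :=
  ∃ n : ℕ, 3 ≤ n ∧ ∃ f : ZMod n ≃ V,
    ∀ x y : V, 0 < X.υ x y ↔ ∃ i : ZMod n, (x = f i ∧ y = f (i + 1)) ∨ (x = f (i + 1) ∧ y = f i)

/-- `X` is a fuzzy cycle: a cycle with at least two edges of minimum weight. -/
def IsFuzzyCycle (X : FuzzyGraph V) : Prop :=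
  X.IsCycleGraph ∧ ∃ a b c d : V, 0 < X.υ a b ∧ 0 < X.υ c d ∧
    Sym2.mk (a, b) ≠ Sym2.mk (c, d) ∧ X.υ a b = X.υ c d ∧
    ∀ x y, 0 < X.υ x y → X.υ a b ≤ X.υ x y

/-- A set of pairwise fuzzy independent vertices. -/
def IsFuzzyIndep (X : FuzzyGraph V) (S : Finset V) : Prop :=
  ∀ a ∈ S, ∀ b ∈ S, a ≠ b → ¬ X.StrongEdge a b

/-- The strong independent domination number. -/
noncomputable def iS (X : FuzzyGraph V) : ℝ :=
  sInf {w | ∃ D : Finset V, X.IsSDS D ∧ X.IsFuzzyIndep D ∧ w = X.weight D}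

/-- The strong independence number. -/
noncomputable def betaS (X : FuzzyGraph V) : ℝ :=
  sSup {w | ∃ S : Finset V, X.IsFuzzyIndep S ∧ w = X.weight S}

/-- Closed strong neighborhood. -/
def closedNbhd (X : FuzzyGraph V) (a : V) : Set V := insert a {b | X.StrongEdge a b}

/-- Open strong neighborhood. -/
def openNbhd (X : FuzzyGraph V) (a : V) : Set V := {b | X.StrongEdge a b}

/-- Private neighborhood of `a` with respect to `S`. -/
def privNbhd (X : FuzzyGraph V) (a : V) (S : Finset V) : Set V :=
  X.closedNbhd a \ ⋃ b ∈ S.erase a, X.closedNbhd b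

/-- `S` is a fuzzy irredundant set. -/
def IsIrredundant (X : FuzzyGraph V) (S : Finset V) : Prop :=
  ∀ a ∈ S, (X.privNbhd a S).Nonempty

/-- `S` is a maximal fuzzy irredundant set. -/
def IsMaximalIrredundant (X : FuzzyGraph V) (S : Finset V) : Prop :=
  X.IsIrredundant S ∧ ∀ v ∉ S, ¬ X.IsIrredundant (insert v S)

/-- The strong irredundance number. -/
noncomputable def irS (X : FuzzyGraph V) : ℝ :=
  sInf {w | ∃ S : Finset V, X.IsMaximalIrredundant S ∧ w = X.weight S}

end FuzzyGraph
/-- For a fuzzy star FS_n with center c,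
SDI(FS_n) = min edge weight + n·q. -/
theorem FuzzyGraph.SDI_fuzzyStar {V : Type*} [Fintype V] [DecidableEq V]
    (X : FuzzyGraph V) (c : V)
    (hstar : ∀ a b : V, 0 < X.υ a b ↔ ((a = c ∧ b ≠ c) ∨ (b = c ∧ a ≠ c)))
    (hstrong : X.IsStrongFG) :
    X.SDI = sInf {w | ∃ u v : V, 0 < X.υ u v ∧ w = X.υ u v} +
      ((Fintype.card V - 1 : ℕ) : ℝ) * X.size := by
    classical
  set L : Finset V := Finset.univ.erase c with hL
  -- basic edge facts
  have hzero : ∀ a b : V, ¬ (0 < X.υ a b) → X.υ a b = 0 := fun a b h =>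
    le_antisymm (not_lt.mp h) (X.υ_nonneg a b)
  have hedge : ∀ u : V, u ≠ c → X.StrongEdge u c := by
    intro u hu
    exact hstrong u c ((hstar u c).mpr (Or.inr ⟨rfl, hu⟩))
  have hedge' : ∀ v : V, v ≠ c → X.StrongEdge c v := by
    intro v hv
    exact hstrong c v ((hstar c v).mpr (Or.inl ⟨rfl, hv⟩))
  have hzero' : ∀ a b : V, a ≠ c → b ≠ c → X.υ a b = 0 := by
    intro a b ha hb
    apply hzero
    intro h
    rcases (hstar a b).mp h with ⟨h1, _⟩ | ⟨h1, _⟩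
    · exact ha h1
    · exact hb h1
  -- minInc of a leaf
  have hminInc_leaf : ∀ u : V, u ≠ c → X.minInc u = X.υ u c := by
    intro u hu
    have hset : {w | ∃ b, X.StrongEdge u b ∧ w = X.υ u b} = {X.υ u c} := by
      ext w
      simp only [Set.mem_setOf_eq, Set.mem_singleton_iff]
      constructor
      · rintro ⟨b, hsb, rfl⟩
        have hb : b = c := by
          rcases (hstar u b).mp hsb.1 with ⟨h1, _⟩ | ⟨h1, _⟩
          · exact absurd h1 hu
          · exact h1
        rw [hb]
      · rintro rfl
        exact ⟨c, hedge u hu, rfl⟩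
    rw [FuzzyGraph.minInc, hset, csInf_singleton]
  -- minInc of the center equals sInf of edge weights
  have hminInc_c : X.minInc c = sInf {w | ∃ u v : V, 0 < X.υ u v ∧ w = X.υ u v} := by
    have hset : {w | ∃ b, X.StrongEdge c b ∧ w = X.υ c b}
        = {w | ∃ u v : V, 0 < X.υ u v ∧ w = X.υ u v} := by
      ext w
      simp only [Set.mem_setOf_eq]
      constructor
      · rintro ⟨b, hsb, rfl⟩
        exact ⟨c, b, hsb.1, rfl⟩
      · rintro ⟨u, v, huv, rfl⟩
        rcases (hstar u v).mp huv with ⟨h1, h2⟩ | ⟨h1, h2⟩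
        · exact ⟨v, hstrong c v (h1 ▸ huv), by rw [h1]⟩
        · exact ⟨u, hedge' u h2, by rw [h1]; exact X.symm u c⟩
    rw [FuzzyGraph.minInc, hset]
  have hminInc_nonneg : ∀ a : V, 0 ≤ X.minInc a := by
    intro a
    apply Real.sInf_nonneg
    rintro w ⟨b, _, rfl⟩
    exact X.υ_nonneg a b
  -- {c} is a minimal SDS
  have hcSDS : X.IsMinimalSDS {c} := by
    constructor
    · intro v hv
      refine ⟨c, Finset.mem_singleton_self c, hedge' v ?_⟩
      intro h; exact hv (by simp [h])
    · intro a ha hSDS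
      have ha' : a = c := Finset.mem_singleton.mp ha
      rw [ha'] at hSDS
      obtain ⟨b, hb, _⟩ := hSDS c (by simp)
      simp at hb
  -- sd c = minInc c
  have hsd_c : X.sd c = X.minInc c := by
    have hmem : X.minInc c ∈ {w | ∃ D : Finset V, X.IsMinimalSDS D ∧ c ∈ D ∧ w = X.weight D} := by
      refine ⟨{c}, hcSDS, Finset.mem_singleton_self c, ?_⟩
      rw [FuzzyGraph.weight, Finset.sum_singleton]
    have hbound : ∀ w ∈ {w | ∃ D : Finset V, X.IsMinimalSDS D ∧ c ∈ D ∧ w = X.weight D},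
        X.minInc c ≤ w := by
      rintro w ⟨D, _, hcD, rfl⟩
      exact Finset.single_le_sum (fun a _ => hminInc_nonneg a) hcD
    exact le_antisymm (csInf_le ⟨X.minInc c, hbound⟩ hmem) (le_csInf ⟨_, hmem⟩ hbound)
  -- the only minimal SDS containing a leaf is L
  have huniq : ∀ u : V, u ≠ c → ∀ D : Finset V, X.IsMinimalSDS D → u ∈ D → D = L := by
    intro u hu D hD huD
    have hcD : c ∉ D := by
      intro hc
      apply hD.2 u huD
      intro v hv
      have hcu : c ∈ D.erase u := Finset.mem_erase.mpr ⟨Ne.symm hu, hc⟩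
      refine ⟨c, hcu, hedge' v ?_⟩
      rintro rfl
      exact hv hcu
    ext v
    simp only [hL, Finset.mem_erase, Finset.mem_univ, and_true]
    constructor
    · intro hvD
      rintro rfl
      exact hcD hvD
    · intro hvc
      by_contra hvD
      obtain ⟨a, haD, hsa⟩ := hD.1 v hvD
      have hac : a ≠ c := fun h => hcD (h ▸ haD)
      rcases (hstar a v).mp hsa.1 with ⟨h1, _⟩ | ⟨h1, _⟩
      · exact hac h1
      · exact hvc h1
  -- L is a minimal SDS (when some leaf exists)
  have hLSDS : ∀ u : V, u ≠ c → X.IsMinimalSDS L := by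
    intro u hu
    constructor
    · intro v hv
      have hv' : v = c := by
        by_contra h
        exact hv (Finset.mem_erase.mpr ⟨h, Finset.mem_univ v⟩)
      subst hv'
      exact ⟨u, Finset.mem_erase.mpr ⟨hu, Finset.mem_univ u⟩, hedge u hu⟩
    · intro a ha hSDS
      obtain ⟨b, hb, hsb⟩ := hSDS a (Finset.notMem_erase a L)
      have hbc : b ≠ c := (Finset.mem_erase.mp (Finset.mem_of_mem_erase hb)).1
      have hac : a ≠ c := (Finset.mem_erase.mp ha).1
      rcases (hstar b a).mp hsb.1 with ⟨h1, _⟩ | ⟨h1, _⟩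
      · exact hbc h1
      · exact hac h1
  -- sd of a leaf = weight L
  have hsd_leaf : ∀ u : V, u ≠ c → X.sd u = X.weight L := by
    intro u hu
    have hset : {w | ∃ D : Finset V, X.IsMinimalSDS D ∧ u ∈ D ∧ w = X.weight D}
        = {X.weight L} := by
      ext w
      simp only [Set.mem_setOf_eq, Set.mem_singleton_iff]
      constructor
      · rintro ⟨D, hD, huD, rfl⟩
        rw [huniq u hu D hD huD]
      · rintro rfl
        exact ⟨L, hLSDS u hu, Finset.mem_erase.mpr ⟨hu, Finset.mem_univ u⟩, rfl⟩
    rw [FuzzyGraph.sd, hset, csInf_singleton]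
  -- weight L = size
  have hweightL : X.weight L = X.size := by
    have hsum : X.weight L = ∑ u ∈ L, X.υ u c := by
      apply Finset.sum_congr rfl
      intro u hu
      exact hminInc_leaf u (Finset.mem_erase.mp hu).1
    have key : ∑ a : V, ∑ b : V, X.υ a b = 2 * ∑ u ∈ L, X.υ u c := by
      have h1 : ∀ a : V, ∑ b : V, X.υ a b = X.υ a c + ∑ b ∈ L, X.υ a b := by
        intro a
        rw [Finset.add_sum_erase _ _ (Finset.mem_univ c)]
      have h2 : ∑ a : V, ∑ b ∈ L, X.υ a b = ∑ b ∈ L, X.υ b c := by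
        rw [← Finset.add_sum_erase _ _ (Finset.mem_univ c)]
        have hrow : ∑ b ∈ L, X.υ c b = ∑ b ∈ L, X.υ b c :=
          Finset.sum_congr rfl (fun b _ => X.symm c b)
        have hrest : ∑ a ∈ L, ∑ b ∈ L, X.υ a b = 0 := by
          apply Finset.sum_eq_zero
          intro a ha
          apply Finset.sum_eq_zero
          intro b hb
          exact hzero' a b (Finset.mem_erase.mp ha).1 (Finset.mem_erase.mp hb).1
        rw [hrow, hrest, add_zero]
      have h3 : ∑ a : V, X.υ a c = ∑ a ∈ L, X.υ a c := by
        rw [← Finset.add_sum_erase _ _ (Finset.mem_univ c), X.loopless, zero_add]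
      calc ∑ a : V, ∑ b : V, X.υ a b
          = ∑ a : V, (X.υ a c + ∑ b ∈ L, X.υ a b) :=
            Finset.sum_congr rfl (fun a _ => h1 a)
        _ = (∑ a : V, X.υ a c) + ∑ a : V, ∑ b ∈ L, X.υ a b := Finset.sum_add_distrib
        _ = (∑ a ∈ L, X.υ a c) + ∑ b ∈ L, X.υ b c := by rw [h2, h3]
        _ = 2 * ∑ u ∈ L, X.υ u c := by ring
    rw [FuzzyGraph.size, key, hsum]
    ring
  -- assembly
  have hcard : L.card = Fintype.card V - 1 := by
    rw [hL, Finset.card_erase_of_mem (Finset.mem_univ c), Finset.card_univ]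
  rw [FuzzyGraph.SDI, ← Finset.add_sum_erase _ _ (Finset.mem_univ c), hsd_c, hminInc_c]
  congr 1
  have : ∑ u ∈ Finset.univ.erase c, X.sd u = ∑ u ∈ Finset.univ.erase c, X.size := by
    apply Finset.sum_congr rfl
    intro u hu
    rw [hsd_leaf u (Finset.mem_erase.mp hu).1, hweightL]
  rw [this, Finset.sum_const, nsmul_eq_mul]
  congr 1
  rw [← hcard, hL]
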